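/- Let $G_1, \dots, G_r$ be independent geometric random variables each with parameter $1/2$, let $w_1, \dots, w_r \ge 0$ with $W_2 = \sum_{i=1}^r w_i^2$ and $W_\infty = \max_i w_i > 0$, and let $Y = \sum_{i=1}^r w_i (G_i - 2)$. Then for every real $c \in [0, 1/(4 W_\infty)]$, $\mathbf{E}[e^{c Y}] \le \exp(4 c^2 W_2)$. -/

import Mathlib

open MeasureTheory ProbabilityTheory

/-- `X` is a geometric random variable with parameter `p`, taking values in `{1,2,3,…}`
with `Pr[X = k] = (1-p)^(k-1) * p`. -/
def IsGeometric {Ω : Type*} [MeasurableSpace Ω] (μ : Measure Ω) (X : Ω → ℕ) (p : ℝ) : Prop :=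
  Measurable X ∧
    ∀ k : ℕ, μ {ω | X ω = k} = if k = 0 then 0 else ENNReal.ofReal ((1 - p) ^ (k - 1) * p)

lemma geom_analytic (t : ℝ) (ht0 : 0 ≤ t) (ht1 : t ≤ 1/4) :
    Real.exp (-t) / 2 * (1 - Real.exp t / 2)⁻¹ ≤ Real.exp (4 * t ^ 2) := by
  have h2 : Real.exp t < 2 := by
    by_contra h
    push_neg at h
    have h16 : (2:ℝ)^4 ≤ Real.exp t ^ 4 := pow_le_pow_left₀ (by norm_num) h 4
    have h4 : Real.exp t ^ 4 = Real.exp (4 * t) := by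
      rw [← Real.exp_nat_mul]; norm_num
    have he : Real.exp (4 * t) ≤ Real.exp 1 := Real.exp_le_exp.2 (by linarith)
    have := Real.exp_one_lt_d9
    norm_num at h16
    linarith
  have hA : Real.exp t ≤ 1 + t + t^2/2 + (2/9)*t^3 := by
    have hb := Real.exp_bound (x := t) (by rw [abs_of_nonneg ht0]; linarith) (n := 3) (by norm_num)
    rw [abs_of_nonneg ht0] at hb
    norm_num [Finset.sum_range_succ, Nat.factorial] at hb
    rw [abs_le] at hb
    linarith [hb.2]
  have hB : Real.exp (-t) ≤ 1 - t + t^2/2 + (2/9)*t^3 := by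
    have hb := Real.exp_bound (x := -t) (by rw [abs_of_nonpos (by linarith)]; linarith) (n := 3) (by norm_num)
    rw [abs_of_nonpos (by linarith : -t ≤ 0)] at hb
    norm_num [Finset.sum_range_succ, Nat.factorial] at hb
    rw [abs_le] at hb
    linarith [hb.2]
  have hden : 0 < 1 - Real.exp t / 2 := by linarith
  have key : Real.exp (-t) / 2 * (1 - Real.exp t / 2)⁻¹ ≤ 1 + 4 * t ^ 2 := by
    rw [mul_inv_le_iff₀ hden]
    have hpos : (0:ℝ) ≤ 1 + 4 * t^2 := by positivity
    have hstep : (1 + 4*t^2) * (1 - (1 + t + t^2/2 + (2/9)*t^3)/2) ≤ (1 + 4*t^2) * (1 - Real.exp t/2) := by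
      apply mul_le_mul_of_nonneg_left _ hpos
      linarith
    have hpoly : (1 - t + t^2/2 + (2/9)*t^3)/2 ≤ (1 + 4*t^2) * (1 - (1 + t + t^2/2 + (2/9)*t^3)/2) := by
      nlinarith [sq_nonneg t, mul_nonneg (sq_nonneg t) (by linarith : (0:ℝ) ≤ 1/4 - t),
        mul_nonneg (mul_nonneg (sq_nonneg t) ht0) (by linarith : (0:ℝ) ≤ 1/4 - t),
        mul_nonneg (mul_nonneg (mul_nonneg (sq_nonneg t) ht0) ht0) (by linarith : (0:ℝ) ≤ 1/4 - t)]
    linarith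
  calc Real.exp (-t) / 2 * (1 - Real.exp t / 2)⁻¹ ≤ 1 + 4 * t ^ 2 := key
    _ ≤ Real.exp (4 * t ^ 2) := by
        have := Real.add_one_le_exp (4 * t ^ 2); linarith

lemma geom_mgf_eq {Ω : Type*} [MeasurableSpace Ω] (μ : Measure Ω) [IsProbabilityMeasure μ]
    (G : Ω → ℕ) (hG : IsGeometric μ G (1/2)) (t : ℝ) (h2 : Real.exp t < 2) :
    ∫ ω, Real.exp (t * ((G ω : ℝ) - 2)) ∂μ = Real.exp (-t) / 2 * (1 - Real.exp t / 2)⁻¹ := by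
  set f : ℕ → ℝ := fun k => Real.exp (t * ((k : ℝ) - 2)) with hf
  set g : ℕ → ℝ := fun k =>
    if k = 0 then 0 else Real.exp (t * ((k : ℝ) - 2)) * ((1/2:ℝ)^(k-1) * (1/2)) with hg
  have hq0 : (0:ℝ) ≤ Real.exp t / 2 := by positivity
  have hq1 : Real.exp t / 2 < 1 := by linarith
  have hshift : ∀ n : ℕ, g (n + 1) = Real.exp (-t) / 2 * (Real.exp t / 2) ^ n := by
    intro n
    simp only [hg, Nat.add_sub_cancel, if_neg (Nat.succ_ne_zero n)]
    rw [div_pow, Real.exp_neg]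
    have : t * ((n + 1 : ℕ) - 2 : ℝ) = (n : ℝ) * t + (-t) := by push_cast; ring
    rw [this, Real.exp_add, Real.exp_nat_mul, Real.exp_neg]
    field_simp
    rw [one_pow, mul_one, div_pow, mul_div_assoc', mul_comm (2 ^ n : ℝ), mul_div_assoc, div_self (pow_ne_zero n two_ne_zero), mul_one]
  have hsum1 : Summable (fun n : ℕ => g (n + 1)) := by
    simp only [hshift]
    exact (summable_geometric_of_lt_one hq0 hq1).mul_left _
  have hsum : Summable g := (summable_nat_add_iff 1).mp hsum1
  have hS : ∑' k, g k = Real.exp (-t) / 2 * (1 - Real.exp t / 2)⁻¹ := by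
    rw [Summable.tsum_eq_zero_add hsum]
    have h0 : g 0 = 0 := by simp [hg]
    rw [h0, zero_add, tsum_congr hshift, tsum_mul_left, tsum_geometric_of_lt_one hq0 hq1]
  have hfm : Measurable f := measurable_from_top
  have h1 : ∫ ω, Real.exp (t * ((G ω : ℝ) - 2)) ∂μ = ∫ k, f k ∂(μ.map G) :=
    (integral_map hG.1.aemeasurable hfm.aestronglyMeasurable).symm
  have hgnn : ∀ k, 0 ≤ g k := by
    intro k
    simp only [hg]
    split
    · exact le_rfl
    · positivity
  rw [h1, integral_eq_lintegral_of_nonneg_ae (ae_of_all _ fun k => (Real.exp_pos _).le)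
    hfm.aestronglyMeasurable, lintegral_countable']
  have hmap : ∀ k : ℕ, (μ.map G) {k} =
      if k = 0 then 0 else ENNReal.ofReal ((1/2:ℝ)^(k-1) * (1/2)) := by
    intro k
    rw [Measure.map_apply hG.1 (measurableSet_singleton k)]
    have hpre : G ⁻¹' {k} = {ω | G ω = k} := rfl
    rw [hpre, hG.2 k]
    norm_num
  have hterm : ∀ k : ℕ, ENNReal.ofReal (f k) * (μ.map G) {k} = ENNReal.ofReal (g k) := by
    intro k
    rw [hmap k]
    by_cases hk : k = 0
    · simp [hk, hg]
    · rw [if_neg hk]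
      simp only [hg, if_neg hk, hf]
      rw [← ENNReal.ofReal_mul (Real.exp_pos _).le]
  rw [tsum_congr hterm, ← ENNReal.ofReal_tsum_of_nonneg hgnn hsum, hS,
    ENNReal.toReal_ofReal (mul_nonneg (by positivity) (inv_nonneg.2 (by linarith)))]

lemma geom_mgf_bound {Ω : Type*} [MeasurableSpace Ω] (μ : Measure Ω) [IsProbabilityMeasure μ]
    (G : Ω → ℕ) (hG : IsGeometric μ G (1/2)) (t : ℝ) (ht0 : 0 ≤ t) (ht1 : t ≤ 1/4) :
    ∫ ω, Real.exp (t * ((G ω : ℝ) - 2)) ∂μ ≤ Real.exp (4 * t ^ 2) := by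
  have h2 : Real.exp t < 2 := by
    by_contra h
    push_neg at h
    have h16 : (2:ℝ)^4 ≤ Real.exp t ^ 4 := pow_le_pow_left₀ (by norm_num) h 4
    have h4 : Real.exp t ^ 4 = Real.exp (4 * t) := by
      rw [← Real.exp_nat_mul]; norm_num
    have he : Real.exp (4 * t) ≤ Real.exp 1 := Real.exp_le_exp.2 (by linarith)
    have := Real.exp_one_lt_d9
    norm_num at h16
    linarith
  rw [geom_mgf_eq μ G hG t h2]
  exact geom_analytic t ht0 ht1

theorem weighted_geometric_mgf_bound
    {Ω : Type*} [MeasurableSpace Ω] (μ : Measure Ω) [IsProbabilityMeasure μ]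
    {r : ℕ} (G : Fin r → Ω → ℕ)
    (hgeom : ∀ i, IsGeometric μ (G i) (1 / 2))
    (hindep : iIndepFun G μ)
    (w : Fin r → ℝ) (hw : ∀ i, 0 ≤ w i)
    (W₂ Winf : ℝ) (hW₂ : W₂ = ∑ i, (w i) ^ 2)
    (hWinf : IsGreatest (Set.range w) Winf) (hWinfPos : 0 < Winf)
    (c : ℝ) (hc0 : 0 ≤ c) (hc1 : c ≤ 1 / (4 * Winf)) :
    ∫ ω, Real.exp (c * ∑ i, w i * ((G i ω : ℝ) - 2)) ∂μ ≤
      Real.exp (4 * c ^ 2 * W₂) := by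
  set X : Fin r → Ω → ℝ := fun i ω => w i * ((G i ω : ℝ) - 2) with hX
  have hXmeas : ∀ i, Measurable (X i) := fun i =>
    (((measurable_from_top (f := fun k : ℕ => (k : ℝ))).comp (hgeom i).1).sub
      measurable_const).const_mul (w i)
  have hXindep : iIndepFun X μ :=
    hindep.comp (fun i (k : ℕ) => w i * ((k : ℝ) - 2)) (fun i => measurable_from_top)
  have hmgf : ∫ ω, Real.exp (c * ∑ i, w i * ((G i ω : ℝ) - 2)) ∂μ
      = mgf (∑ i, X i) μ c := by
    unfold mgf
    congr 1
    funext ω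
    simp only [Finset.sum_apply]
    rfl
  rw [hmgf, hXindep.mgf_sum hXmeas Finset.univ]
  have hbound : ∀ i : Fin r, mgf (X i) μ c ≤ Real.exp (4 * c ^ 2 * (w i) ^ 2) := by
    intro i
    have hwi : w i ≤ Winf := hWinf.2 ⟨i, rfl⟩
    have ht0 : 0 ≤ c * w i := mul_nonneg hc0 (hw i)
    have ht1 : c * w i ≤ 1 / 4 := by
      calc c * w i ≤ c * Winf := by
            exact mul_le_mul_of_nonneg_left hwi hc0
        _ ≤ (1 / (4 * Winf)) * Winf := by
            exact mul_le_mul_of_nonneg_right hc1 hWinfPos.le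
        _ = 1 / 4 := by field_simp
    have := geom_mgf_bound μ (G i) (hgeom i) (c * w i) ht0 ht1
    unfold mgf
    calc ∫ ω, Real.exp (c * X i ω) ∂μ
        = ∫ ω, Real.exp ((c * w i) * ((G i ω : ℝ) - 2)) ∂μ := by
          congr 1; funext ω; rw [hX]; ring_nf
      _ ≤ Real.exp (4 * (c * w i) ^ 2) := this
      _ = Real.exp (4 * c ^ 2 * (w i) ^ 2) := by ring_nf
  calc ∏ i, mgf (X i) μ c ≤ ∏ i, Real.exp (4 * c ^ 2 * (w i) ^ 2) :=
        Finset.prod_le_prod (fun i _ => mgf_nonneg) (fun i _ => hbound i)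
    _ = Real.exp (∑ i, 4 * c ^ 2 * (w i) ^ 2) := (Real.exp_sum _ _).symm
    _ = Real.exp (4 * c ^ 2 * W₂) := by rw [hW₂, ← Finset.mul_sum]
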